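/- arXiv:0811.0799 — 2 statements merged into one kernel-verified Lean document; each statement's English description precedes it below -/
import Mathlib

section
/- Let n ≥ 2 and a, b > 0. The even radius of the semiregular 2n-gon P_n(a,b) — the distance from the center of the polygon to the midpoint of an edge of length a — equals r_n(a,b) = (b + a·cos(π/n)) / (2·sin(π/n)), and the odd radius (distance from center to midpoint of an edge of length b) equals r_n(b,a) = (a + b·cos(π/n)) / (2·sin(π/n)). -/
open Real

private lemma sum_sum_aux (m : ℕ) (F : ℕ → ℂ) :
    ∑ k ∈ Finset.range m, ∑ i ∈ Finset.range k, F i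
      = (m : ℂ) * ∑ i ∈ Finset.range m, F i
        - ∑ i ∈ Finset.range m, ((i : ℂ) + 1) * F i := by
  induction m with
  | zero => simp
  | succ m ih =>
      rw [Finset.sum_range_succ, ih, Finset.sum_range_succ (f := F),
        Finset.sum_range_succ (f := fun i => ((i : ℂ) + 1) * F i)]
      push_cast
      ring

private lemma geom_deriv_aux (x : ℂ) (m : ℕ) :
    (x - 1) * ∑ j ∈ Finset.range m, (j : ℂ) * x ^ j
      = ((m : ℂ) - 1) * x ^ m + 1 - ∑ j ∈ Finset.range m, x ^ j := by
  induction m with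
  | zero => simp
  | succ m ih =>
      rw [Finset.sum_range_succ, mul_add, ih,
        Finset.sum_range_succ (f := fun j => x ^ j)]
      push_cast
      ring

private lemma sum_range_double {M : Type*} [AddCommMonoid M] (n : ℕ) (g : ℕ → M) :
    ∑ i ∈ Finset.range (2 * n), g i
      = ∑ j ∈ Finset.range n, (g (2 * j) + g (2 * j + 1)) := by
  induction n with
  | zero => simp
  | succ n ih =>
      have h : 2 * (n + 1) = (2 * n + 1) + 1 := by ring
      rw [h, Finset.sum_range_succ, Finset.sum_range_succ, ih, Finset.sum_range_succ,
        add_assoc]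

/-- The even radius of the semiregular `2n`-gon `P_n(a,b)` (distance from the centroid
to the midpoint of an edge of length `a`) is `r_n(a,b) = (b + a·cos(π/n))/(2·sin(π/n))`,
and the odd radius is `r_n(b,a)`. -/
theorem semiregular_polygon_radii (n : ℕ) (hn : 2 ≤ n) (a b : ℝ)
    (ha : 0 < a) (hb : 0 < b)
    (v : ℕ → ℝ × ℝ)
    (hv : ∀ i, v i = (if Even i then a else b) •
      (Real.cos (i * π / n), Real.sin (i * π / n)))
    -- the vertices of the polygon, starting at the origin
    (p : ℕ → ℝ × ℝ) (hp : ∀ k, p k = ∑ i ∈ Finset.range k, v i)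
    -- the center of the polygon: the centroid of its vertices
    (c : ℝ × ℝ) (hc : c = (1 / (2 * n : ℝ)) • ∑ k ∈ Finset.range (2 * n), p k)
    -- the midpoints of the first even edge and the first odd edge
    (qeven qodd : ℝ × ℝ)
    (hqeven : qeven = p 0 + (1 / 2 : ℝ) • v 0)
    (hqodd : qodd = p 1 + (1 / 2 : ℝ) • v 1) :
    Real.sqrt ((c.1 - qeven.1) ^ 2 + (c.2 - qeven.2) ^ 2)
        = (b + a * Real.cos (π / n)) / (2 * Real.sin (π / n)) ∧
      Real.sqrt ((c.1 - qodd.1) ^ 2 + (c.2 - qodd.2) ^ 2)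
        = (a + b * Real.cos (π / n)) / (2 * Real.sin (π / n)) := by
  have hn0 : (0:ℕ) < n := by omega
  have hnR : (0:ℝ) < n := by exact_mod_cast hn0
  have hnC : (n:ℂ) ≠ 0 := by exact_mod_cast hn0.ne'
  have hn2 : (2:ℝ) ≤ n := by exact_mod_cast hn
  set θ : ℝ := π / n with hθdef
  have hθpos : 0 < θ := div_pos Real.pi_pos hnR
  have hθle : θ ≤ π / 2 := by
    rw [hθdef, div_le_div_iff₀ hnR two_pos]
    nlinarith [Real.pi_pos]
  have hsin : 0 < Real.sin θ :=
    Real.sin_pos_of_pos_of_lt_pi hθpos (lt_of_le_of_lt hθle (by linarith [Real.pi_pos]))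
  have hcos : 0 ≤ Real.cos θ :=
    Real.cos_nonneg_of_mem_Icc ⟨by linarith, hθle⟩
  -- complexification
  set Z : ℝ × ℝ → ℂ := fun w => ⟨w.1, w.2⟩ with hZdef
  have hZsum : ∀ (s : Finset ℕ) (f : ℕ → ℝ × ℝ),
      Z (∑ i ∈ s, f i) = ∑ i ∈ s, Z (f i) := by
    intro s f
    apply Complex.ext
    · simp [hZdef, Complex.re_sum, Prod.fst_sum]
    · simp [hZdef, Complex.im_sum, Prod.snd_sum]
  have hZadd : ∀ w₁ w₂ : ℝ × ℝ, Z (w₁ + w₂) = Z w₁ + Z w₂ := by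
    intro w₁ w₂; apply Complex.ext <;> simp [hZdef]
  have hZsmul : ∀ (r : ℝ) (w : ℝ × ℝ), Z (r • w) = (r : ℂ) * Z w := by
    intro r w
    apply Complex.ext <;> simp [hZdef]
  set ω : ℂ := Complex.exp (θ * Complex.I) with hωdef
  set ζ : ℂ := ω ^ 2 with hζdef
  have hωcs : ω = Complex.cos θ + Complex.sin θ * Complex.I := Complex.exp_mul_I _
  have hωabs : ‖ω‖ = 1 := by
    rw [hωdef, Complex.norm_exp]; simp
  have hζn : ζ ^ n = 1 := by
    rw [hζdef, hωdef, ← pow_mul, ← Complex.exp_nat_mul]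
    have h2 : ((2 * n : ℕ) : ℂ) * ((θ : ℂ) * Complex.I) = (2 * π) * Complex.I := by
      rw [hθdef]
      push_cast
      field_simp
    rw [h2]
    simpa using Complex.exp_int_mul_two_pi_mul_I 1
  have hζcs : ζ = Complex.cos ((2*θ : ℝ):ℂ) + Complex.sin ((2*θ : ℝ):ℂ) * Complex.I := by
    rw [hζdef, hωdef, ← Complex.exp_nat_mul]
    have h2 : ((2:ℕ):ℂ) * ((θ:ℂ) * Complex.I) = ((2*θ : ℝ) : ℂ) * Complex.I := by
      push_cast; ring
    rw [h2, Complex.exp_mul_I]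
  have hζne : ζ ≠ 1 := by
    intro h
    have h2θ : (0:ℝ) < 2 * θ := by linarith
    have h2θ' : 2 * θ ≤ π := by linarith
    have hlt : Real.cos (2 * θ) < 1 := by
      have := Real.cos_lt_cos_of_nonneg_of_le_pi (le_refl 0) h2θ' h2θ
      simpa using this
    have hre : ζ.re = Real.cos (2 * θ) := by
      rw [hζcs]
      simp only [Complex.add_re, Complex.mul_re, Complex.I_re, Complex.I_im,
        Complex.cos_ofReal_re, Complex.cos_ofReal_im, Complex.sin_ofReal_re,
        Complex.sin_ofReal_im, mul_zero, mul_one, zero_mul, sub_zero, add_zero,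
        zero_sub]
    rw [h] at hre
    simp at hre
    linarith
  have h1ζne : (1:ℂ) - ζ ≠ 0 := sub_ne_zero.mpr (Ne.symm hζne)
  have hζsub : ζ - 1 ≠ 0 := sub_ne_zero.mpr hζne
  have hgeom : ∑ j ∈ Finset.range n, ζ ^ j = 0 := by
    rw [geom_sum_eq hζne, hζn, sub_self, zero_div]
  have hT : (ζ - 1) * ∑ j ∈ Finset.range n, (j : ℂ) * ζ ^ j = (n : ℂ) := by
    rw [geom_deriv_aux, hζn, hgeom]
    ring
  have hTval : ∑ j ∈ Finset.range n, (j:ℂ) * ζ ^ j = (n:ℂ) / (ζ - 1) := by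
    field_simp
    linear_combination hT
  -- the complex edge vectors
  have hZv : ∀ i : ℕ, Z (v i) = (if Even i then (a:ℂ) else (b:ℂ)) * ω ^ i := by
    intro i
    rw [hv i]
    have h1 : ((i : ℝ) * π / n) = (i : ℝ) * θ := by rw [hθdef]; ring
    rw [h1, hZsmul]
    have h2 : Z (Real.cos ((i:ℝ) * θ), Real.sin ((i:ℝ) * θ)) = ω ^ i := by
      rw [hωdef, ← Complex.exp_nat_mul]
      have h3 : ((i:ℕ):ℂ) * ((θ:ℂ) * Complex.I) = (((i:ℝ) * θ : ℝ) : ℂ) * Complex.I := by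
        push_cast; ring
      rw [h3, Complex.exp_mul_I]
      apply Complex.ext <;>
        simp only [hZdef, Complex.add_re, Complex.add_im, Complex.mul_re,
          Complex.mul_im, Complex.I_re, Complex.I_im, Complex.cos_ofReal_re,
          Complex.cos_ofReal_im, Complex.sin_ofReal_re, Complex.sin_ofReal_im,
          mul_zero, mul_one, zero_mul, sub_zero, add_zero, zero_add, zero_sub] <;>
        ring
    rw [h2]
    split_ifs <;> simp
  -- closed form for the center
  set F : ℕ → ℂ := fun i => (if Even i then (a:ℂ) else (b:ℂ)) * ω ^ i with hFdef
  have hF_even : ∀ j : ℕ, F (2 * j) = (a:ℂ) * ζ ^ j := by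
    intro j
    simp only [hFdef, hζdef]
    rw [if_pos (even_two_mul j), pow_mul]
  have hF_odd : ∀ j : ℕ, F (2 * j + 1) = (b:ℂ) * ω * ζ ^ j := by
    intro j
    simp only [hFdef, hζdef]
    rw [if_neg (by simp [Nat.even_add_one, parity_simps]), pow_succ, pow_mul]
    ring
  have hS1 : ∑ i ∈ Finset.range (2 * n), F i = 0 := by
    rw [sum_range_double]
    have h4 : ∀ j ∈ Finset.range n, F (2 * j) + F (2 * j + 1)
        = ((a:ℂ) + b * ω) * ζ ^ j := by
      intro j _
      rw [hF_even, hF_odd]; ring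
    rw [Finset.sum_congr rfl h4, ← Finset.mul_sum, hgeom, mul_zero]
  have hS2 : ∑ i ∈ Finset.range (2 * n), ((i:ℂ) + 1) * F i
      = 2 * ((a:ℂ) + b * ω) * ∑ j ∈ Finset.range n, (j:ℂ) * ζ ^ j
        + ((a:ℂ) + 2 * b * ω) * ∑ j ∈ Finset.range n, ζ ^ j := by
    rw [sum_range_double]
    rw [Finset.mul_sum, Finset.mul_sum, ← Finset.sum_add_distrib]
    apply Finset.sum_congr rfl
    intro j _
    rw [hF_even, hF_odd]
    push_cast
    ring
  have hZc : Z c = ((a:ℂ) + b * ω) / (1 - ζ) := by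
    rw [hc, hZsmul, hZsum]
    have hpk : ∀ k ∈ Finset.range (2 * n), Z (p k) = ∑ i ∈ Finset.range k, F i := by
      intro k _
      rw [hp k, hZsum]
      exact Finset.sum_congr rfl fun i _ => hZv i
    rw [Finset.sum_congr rfl hpk, sum_sum_aux, hS1, hS2, hgeom, hTval]
    push_cast
    field_simp
    ring
  -- midpoints
  have hZp0 : Z (p 0) = 0 := by
    rw [hp 0]
    apply Complex.ext <;> simp [hZdef]
  have hq1 : Z qeven = (a/2 : ℂ) := by
    rw [hqeven, hZadd, hZsmul, hZv 0, hZp0]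
    norm_num
    ring
  have hq2 : Z qodd = (a:ℂ) + (b/2) * ω := by
    rw [hqodd, hZadd, hZsmul, hZv 1]
    have h5 : Z (p 1) = (a:ℂ) := by
      rw [hp 1, hZsum, Finset.sum_range_one, hZv 0]
      norm_num
    rw [h5]
    norm_num
    ring
  -- trig identities
  have hpyth := Complex.sin_sq_add_cos_sq (θ:ℂ)
  have h1ζeq : (1:ℂ) - ζ = -(2 * Complex.I * (Real.sin θ : ℂ) * ω) := by
    rw [hζdef, hωcs, Complex.ofReal_sin]
    linear_combination (Complex.sin (θ:ℂ))^2 * Complex.I_sq - hpyth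
  have h1ω2 : (1:ℂ) + ζ = 2 * (Real.cos θ : ℂ) * ω := by
    rw [hζdef, hωcs, Complex.ofReal_cos]
    linear_combination (Complex.sin (θ:ℂ))^2 * Complex.I_sq - hpyth
  have habs1ζ : ‖1 - ζ‖ = 2 * Real.sin θ := by
    rw [h1ζeq, norm_neg, norm_mul, norm_mul, norm_mul, Complex.norm_two,
      Complex.norm_I, Complex.norm_real, Real.norm_eq_abs, hωabs, abs_of_pos hsin]
    ring
  -- distances via Complex.abs
  have hdist : ∀ q : ℝ × ℝ, Real.sqrt ((c.1 - q.1) ^ 2 + (c.2 - q.2) ^ 2)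
      = ‖Z c - Z q‖ := by
    intro q
    rw [Complex.norm_def, Complex.normSq_apply]
    have h1 : (Z c - Z q).re = c.1 - q.1 := by simp [hZdef]
    have h2 : (Z c - Z q).im = c.2 - q.2 := by simp [hZdef]
    rw [h1, h2]
    congr 1
    ring
  constructor
  · have h1ω2' : (1:ℂ) + ω^2 = 2 * Complex.cos (θ:ℂ) * ω := by
      rw [← hζdef, h1ω2, Complex.ofReal_cos]
    have heq1 : Z c - Z qeven = ω * ((b + a * Real.cos θ : ℝ):ℂ) / (1 - ζ) := by
      rw [hZc, hq1, eq_div_iff h1ζne, sub_mul, div_mul_cancel₀ _ h1ζne, hζdef]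
      push_cast
      linear_combination (a/2 : ℂ) * h1ω2'
    rw [hdist qeven, heq1, norm_div, norm_mul, hωabs, Complex.norm_real, Real.norm_eq_abs, habs1ζ,
      one_mul, abs_of_nonneg (by nlinarith : (0:ℝ) ≤ b + a * Real.cos θ)]
  · have h1ω2' : (1:ℂ) + ω^2 = 2 * Complex.cos (θ:ℂ) * ω := by
      rw [← hζdef, h1ω2, Complex.ofReal_cos]
    have heq2 : Z c - Z qodd = ζ * ((a + b * Real.cos θ : ℝ):ℂ) / (1 - ζ) := by
      rw [hZc, hq2, eq_div_iff h1ζne, sub_mul, div_mul_cancel₀ _ h1ζne, hζdef]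
      push_cast
      linear_combination (b/2 : ℂ) * ω * h1ω2'
    have hζabs : ‖ζ‖ = 1 := by
      rw [hζdef, norm_pow, hωabs, one_pow]
    rw [hdist qodd, heq2, norm_div, norm_mul, hζabs, Complex.norm_real, Real.norm_eq_abs, habs1ζ,
      one_mul, abs_of_nonneg (by nlinarith : (0:ℝ) ≤ a + b * Real.cos θ)]
end

section
/- Let m, n be even positive integers, γ = gcd(m,n), and suppose γ > 2 and at least one of m/γ, n/γ is even. Then for every choice of signs and every ε ∈ {-2, 0, 2}, m - n + ε is not divisible by 2γ; in particular there is no integer k coprime to 2mn/γ with k ≡ m ± 1 (mod 2m) and k ≡ n ± 1 (mod 2n). -/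
/-- If `m`, `n` are even, `γ = gcd(m,n) > 2` and at least one of `m/γ`, `n/γ` is even,
then `m - n + ε` is never divisible by `2γ` for `ε ∈ {-2,0,2}`, and there is no
integer `k` coprime to `2mn/γ` with `k ≡ m ± 1 (mod 2m)` and `k ≡ n ± 1 (mod 2n)`. -/
theorem no_galois_automorphism (m n : ℕ) (hm : 0 < m) (hn : 0 < n)
    (hme : Even m) (hne : Even n) (γ : ℕ) (hγ : γ = Nat.gcd m n)
    (hγ2 : 2 < γ) (heven : Even (m / γ) ∨ Even (n / γ)) :
    (∀ ε ∈ ({-2, 0, 2} : Set ℤ), ¬ ((2 * γ : ℤ) ∣ ((m : ℤ) - n + ε))) ∧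
    ¬ ∃ k : ℤ, IsCoprime k ((2 * m * n / γ : ℕ) : ℤ) ∧
        (∃ s ∈ ({-1, 1} : Set ℤ), (2 * m : ℤ) ∣ (k - (m + s))) ∧
        (∃ t ∈ ({-1, 1} : Set ℤ), (2 * n : ℤ) ∣ (k - (n + t))) := by
  have hγm : γ ∣ m := hγ ▸ Nat.gcd_dvd_left m n
  have hγn : γ ∣ n := hγ ▸ Nat.gcd_dvd_right m n
  have hγ0 : 0 < γ := by omega
  have hcop : Nat.gcd (m / γ) (n / γ) = 1 := by
    rw [hγ]; exact Nat.coprime_div_gcd_div_gcd (hγ ▸ hγ0)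
  have hma : m = γ * (m / γ) := (Nat.mul_div_cancel' hγm).symm
  have hnb : n = γ * (n / γ) := (Nat.mul_div_cancel' hγn).symm
  have key : ∀ ε ∈ ({-2, 0, 2} : Set ℤ), ¬ ((2 * γ : ℤ) ∣ ((m : ℤ) - n + ε)) := by
    intro ε hε hdvd
    have h1 : (γ : ℤ) ∣ ((m : ℤ) - n + ε) := dvd_trans ⟨2, by ring⟩ hdvd
    have h2 : (γ : ℤ) ∣ ((m : ℤ) - n) :=
      dvd_sub (Int.natCast_dvd_natCast.2 hγm) (Int.natCast_dvd_natCast.2 hγn)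
    have hγε : (γ : ℤ) ∣ ε := by
      have := dvd_sub h1 h2
      simpa using this
    simp only [Set.mem_insert_iff, Set.mem_singleton_iff] at hε
    rcases hε with rfl | rfl | rfl
    · have : (γ : ℤ) ∣ 2 := (dvd_neg).mp hγε
      have := Int.le_of_dvd (by norm_num) this
      omega
    · -- ε = 0
      rw [add_zero] at hdvd
      set a := m / γ with ha
      set b := n / γ with hb
      have hmn : (m : ℤ) - n = (γ : ℤ) * ((a : ℤ) - b) := by
        rw [hma, hnb]; push_cast; ring
      rw [hmn] at hdvd
      obtain ⟨c, hc⟩ := hdvd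
      have hcc : (a : ℤ) - b = 2 * c := by
        have hne : (γ : ℤ) ≠ 0 := by exact_mod_cast hγ0.ne'
        apply mul_left_cancel₀ hne
        rw [hc]; ring
      have h2ab : (2 : ℤ) ∣ (a : ℤ) - b := ⟨c, hcc⟩
      have hboth : 2 ∣ a ∧ 2 ∣ b := by
        rcases heven with h | h <;> rcases h with ⟨x, hx⟩ <;> omega
      have : 2 ∣ Nat.gcd a b := Nat.dvd_gcd hboth.1 hboth.2
      omega
    · have := Int.le_of_dvd (by norm_num) hγε
      omega
  refine ⟨key, ?_⟩
  rintro ⟨k, -, ⟨s, hs, hms⟩, ⟨t, ht, hnt⟩⟩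
  have hdm : (2 * γ : ℤ) ∣ (2 * m : ℤ) := by
    exact_mod_cast Int.natCast_dvd_natCast.2 (mul_dvd_mul_left 2 hγm)
  have hdn : (2 * γ : ℤ) ∣ (2 * n : ℤ) := by
    exact_mod_cast Int.natCast_dvd_natCast.2 (mul_dvd_mul_left 2 hγn)
  have hd : (2 * γ : ℤ) ∣ ((m : ℤ) - n + (s - t)) := by
    have := dvd_sub (hdn.trans hnt) (hdm.trans hms)
    have heq : (k - (n + t)) - (k - (m + s)) = (m : ℤ) - n + (s - t) := by ring
    rwa [heq] at this
  simp only [Set.mem_insert_iff, Set.mem_singleton_iff] at hs ht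
  exact key (s - t) (by rcases hs with rfl | rfl <;> rcases ht with rfl | rfl <;> norm_num) hd
end
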